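/- Let M ≥ 2 be a natural number, α : Fin M → ℝ, and β : Fin M → ℝᵐ, with means ᾱ = (1/M)·Σᵢ αᵢ and β̄ = (1/M)·Σᵢ βᵢ. Define the ensemble variance σ²(u) = (1/(M-1))·Σᵢ ((αᵢ + ⟨βᵢ, u⟩) - (ᾱ + ⟨β̄, u⟩))² for u ∈ ℝᵐ. Then σ²(u) = ‖L u + l‖² for all u ∈ ℝᵐ, where L : ℝᵐ → ℝᴹ is the linear map whose i-th coordinate is (L u)ᵢ = ⟨βᵢ - β̄, u⟩ / √(M-1) and l ∈ ℝᴹ has coordinates lᵢ = (αᵢ - ᾱ)/√(M-1). Consequently u ↦ √(σ²(u)) = ‖L u + l‖ is a convex function of u. -/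

import Mathlib

open scoped RealInnerProductSpace

/-- For an ensemble of `M ≥ 2` control-affine approximators
`ḣᵢ(u) = αᵢ + ⟨βᵢ, u⟩` with means `ᾱ, β̄`, the ensemble variance
`σ²(u) = (1/(M-1)) Σᵢ ((αᵢ + ⟨βᵢ,u⟩) - (ᾱ + ⟨β̄,u⟩))²` satisfies `σ²(u) = ‖L u + l‖²`,
where `(L u)ᵢ = ⟨βᵢ - β̄, u⟩ / √(M-1)` and `lᵢ = (αᵢ - ᾱ)/√(M-1)`; consequently
`u ↦ √(σ²(u)) = ‖L u + l‖` is convex. -/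
theorem stmt_9 {m : ℕ} (M : ℕ) (hM : 2 ≤ M)
    (α : Fin M → ℝ) (β : Fin M → EuclideanSpace ℝ (Fin m))
    (αbar : ℝ) (hαbar : αbar = (1 / (M : ℝ)) * ∑ i, α i)
    (βbar : EuclideanSpace ℝ (Fin m)) (hβbar : βbar = ((M : ℝ)⁻¹) • ∑ i, β i)
    (σsq : EuclideanSpace ℝ (Fin m) → ℝ)
    (hσsq : ∀ u, σsq u =
      (1 / ((M : ℝ) - 1)) * ∑ i, ((α i + ⟪β i, u⟫) - (αbar + ⟪βbar, u⟫)) ^ 2)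
    (L : EuclideanSpace ℝ (Fin m) →ₗ[ℝ] EuclideanSpace ℝ (Fin M))
    (hL : ∀ u i, L u i = ⟪β i - βbar, u⟫ / Real.sqrt ((M : ℝ) - 1))
    (l : EuclideanSpace ℝ (Fin M))
    (hl : ∀ i, l i = (α i - αbar) / Real.sqrt ((M : ℝ) - 1)) :
    (∀ u, σsq u = ‖L u + l‖ ^ 2)
      ∧ ConvexOn ℝ Set.univ (fun u => Real.sqrt (σsq u)) := by
  have hMpos : (0:ℝ) < (M : ℝ) - 1 := by
    have : (2:ℝ) ≤ (M:ℝ) := by exact_mod_cast hM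
    linarith
  have hkey : ∀ u, σsq u = ‖L u + l‖ ^ 2 := by
    intro u
    have hnorm : ‖L u + l‖ ^ 2 = ∑ i, (L u i + l i) ^ 2 := by
      rw [EuclideanSpace.norm_eq, Real.sq_sqrt (by positivity)]
      refine Finset.sum_congr rfl fun i _ => ?_
      simp [Real.norm_eq_abs, sq_abs]
    rw [hσsq, hnorm]
    rw [Finset.mul_sum]
    refine Finset.sum_congr rfl fun i _ => ?_
    rw [hL, hl, ← add_div, div_pow, Real.sq_sqrt hMpos.le,
      inner_sub_left]
    ring
  refine ⟨hkey, ?_⟩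
  have heq : (fun u => Real.sqrt (σsq u)) = fun u => ‖L u + l‖ := by
    funext u
    rw [hkey u, Real.sqrt_sq (norm_nonneg _)]
  rw [heq]
  refine ⟨convex_univ, fun u _ v _ a b ha hb hab => ?_⟩
  have : L (a • u + b • v) + l = a • (L u + l) + b • (L v + l) := by
    have hl' : a • l + b • l = l := by rw [← add_smul, hab, one_smul]
    rw [map_add, map_smul, map_smul, smul_add, smul_add]
    rw [show a • (L u) + a • l + (b • (L v) + b • l) = a • (L u) + b • (L v) + (a • l + b • l) by abel, hl']
  simp only []
  rw [this, smul_eq_mul, smul_eq_mul]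
  calc ‖a • (L u + l) + b • (L v + l)‖ ≤ ‖a • (L u + l)‖ + ‖b • (L v + l)‖ :=
        norm_add_le _ _
    _ = a * ‖L u + l‖ + b * ‖L v + l‖ := by
        rw [norm_smul, norm_smul, Real.norm_eq_abs, Real.norm_eq_abs,
          abs_of_nonneg ha, abs_of_nonneg hb]
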